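/- Let E be a 3-dimensional real vector space, D ⊆ E a 2-dimensional subspace, and ℓ ∈ E a vector with ℓ ∉ D. Let ω₁ and ω₂ be alternating bilinear forms on E that vanish on D (that is, ωᵢ(u, v) = 0 for all u, v ∈ D). Then there exist linear functionals η, θ₁, θ₂ on E such that η vanishes on D, η(ℓ) = 1, θᵢ(ℓ) = 0, and ωᵢ(v, w) = η(v)·θᵢ(w) − η(w)·θᵢ(v) for all v, w ∈ E and i = 1, 2 (that is, ωᵢ = η ∧ θᵢ). Moreover, if ω₁ and ω₂ are linearly independent, then the restrictions of θ₁ and θ₂ to D are linearly independent. -/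

import Mathlib

/-- In a 3-dimensional real vector space `E` with a 2-dimensional subspace `D` and a
vector `ℓ ∉ D`, two alternating bilinear forms `ω₁, ω₂` vanishing on `D` can be
written as `ωᵢ = η ∧ θᵢ` with `η` annihilating `D`, `η ℓ = 1`, `θᵢ ℓ = 0`; moreover
if `ω₁, ω₂` are linearly independent then so are the restrictions of `θ₁, θ₂` to `D`. -/
theorem alternating_forms_factorization (E : Type*) [AddCommGroup E] [Module ℝ E]
    [FiniteDimensional ℝ E] (hE : Module.finrank ℝ E = 3)
    (D : Submodule ℝ E) (hD : Module.finrank ℝ D = 2)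
    (ℓ : E) (hℓ : ℓ ∉ D)
    (ω₁ ω₂ : E →ₗ[ℝ] E →ₗ[ℝ] ℝ)
    (halt₁ : ∀ v, ω₁ v v = 0) (halt₂ : ∀ v, ω₂ v v = 0)
    (hD₁ : ∀ u ∈ D, ∀ v ∈ D, ω₁ u v = 0)
    (hD₂ : ∀ u ∈ D, ∀ v ∈ D, ω₂ u v = 0) :
    ∃ η θ₁ θ₂ : E →ₗ[ℝ] ℝ,
      (∀ v ∈ D, η v = 0) ∧ η ℓ = 1 ∧ θ₁ ℓ = 0 ∧ θ₂ ℓ = 0 ∧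
      (∀ v w, ω₁ v w = η v * θ₁ w - η w * θ₁ v) ∧
      (∀ v w, ω₂ v w = η v * θ₂ w - η w * θ₂ v) ∧
      (LinearIndependent ℝ ![ω₁, ω₂] →
        LinearIndependent ℝ ![θ₁.domRestrict D, θ₂.domRestrict D]) := by
  -- construct η
  have hl0 : (Submodule.Quotient.mk ℓ : E ⧸ D) ≠ 0 := by
    simpa [Submodule.Quotient.mk_eq_zero] using hℓ
  obtain ⟨g, hg⟩ : ∃ g : (E ⧸ D) →ₗ[ℝ] ℝ, g (Submodule.Quotient.mk ℓ) ≠ 0 := by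
    by_contra h
    push_neg at h
    exact hl0 ((Module.forall_dual_apply_eq_zero_iff ℝ _).mp h)
  set c : ℝ := g (Submodule.Quotient.mk ℓ) with hc
  set η : E →ₗ[ℝ] ℝ := c⁻¹ • (g ∘ₗ D.mkQ) with hη
  have hηD : ∀ v ∈ D, η v = 0 := by
    intro v hv
    simp [hη, Submodule.Quotient.mk_eq_zero, (Submodule.Quotient.mk_eq_zero D).mpr hv,
      Submodule.mkQ_apply]
  have hηℓ : η ℓ = 1 := by
    simp [hη, Submodule.mkQ_apply, ← hc, inv_mul_cancel₀ hg]
  -- decomposition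
  have hℓne : ℓ ≠ 0 := fun h => hℓ (h ▸ D.zero_mem)
  have hinf : D ⊓ (ℝ ∙ ℓ) = ⊥ := by
    rw [Submodule.eq_bot_iff]
    rintro x ⟨hxD, hxs⟩
    obtain ⟨a, rfl⟩ := Submodule.mem_span_singleton.mp hxs
    rcases eq_or_ne a 0 with rfl | ha
    · simp
    · exact absurd (by simpa [smul_smul, inv_mul_cancel₀ ha] using D.smul_mem a⁻¹ hxD) hℓ
  have hsup : D ⊔ (ℝ ∙ ℓ) = ⊤ := by
    apply Submodule.eq_top_of_finrank_eq
    have h1 := Submodule.finrank_sup_add_finrank_inf_eq D (ℝ ∙ ℓ)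
    rw [hinf, finrank_bot, hD, finrank_span_singleton hℓne] at h1
    omega
  have hdecomp : ∀ v : E, ∃ d ∈ D, ∃ a : ℝ, v = d + a • ℓ := by
    intro v
    have hv : v ∈ D ⊔ (ℝ ∙ ℓ) := hsup ▸ Submodule.mem_top
    obtain ⟨d, hd, s, hs, hds⟩ := Submodule.mem_sup.mp hv
    obtain ⟨a, rfl⟩ := Submodule.mem_span_singleton.mp hs
    exact ⟨d, hd, a, hds.symm⟩
  -- key factorization
  have key : ∀ (ω : E →ₗ[ℝ] E →ₗ[ℝ] ℝ), (∀ v, ω v v = 0) →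
      (∀ u ∈ D, ∀ v ∈ D, ω u v = 0) →
      ∀ v w, ω v w = η v * ω ℓ w - η w * ω ℓ v := by
    intro ω halt hDz v w
    have hanti : ∀ a b : E, ω a b = - ω b a := by
      intro a b
      have h := halt (a + b)
      simp only [map_add, LinearMap.add_apply, halt] at h
      linarith
    obtain ⟨d, hd, a, rfl⟩ := hdecomp v
    obtain ⟨e, he, b, rfl⟩ := hdecomp w
    simp only [map_add, map_smul, LinearMap.add_apply, LinearMap.smul_apply, smul_eq_mul,
      hDz d hd e he, halt, hηD d hd, hηD e he, hηℓ]
    rw [hanti d ℓ]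
    ring
  refine ⟨η, ω₁ ℓ, ω₂ ℓ, hηD, hηℓ, halt₁ ℓ, halt₂ ℓ,
    key ω₁ halt₁ hD₁, key ω₂ halt₂ hD₂, ?_⟩
  intro hli
  replace hli := (LinearIndependent.pair_iff (M := E →ₗ[ℝ] E →ₗ[ℝ] ℝ)).mp hli
  refine (LinearIndependent.pair_iff (M := D →ₗ[ℝ] ℝ)).mpr ?_
  intro s t hst
  have hφD : ∀ v ∈ D, s * ω₁ ℓ v + t * ω₂ ℓ v = 0 := by
    intro v hv
    have := LinearMap.congr_fun hst ⟨v, hv⟩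
    simpa [LinearMap.domRestrict_apply, smul_eq_mul] using this
  have hφ : ∀ v, s * ω₁ ℓ v + t * ω₂ ℓ v = 0 := by
    intro v
    obtain ⟨d, hd, a, rfl⟩ := hdecomp v
    have h := hφD d hd
    simp only [map_add, map_smul, smul_eq_mul, halt₁, halt₂]
    ring_nf
    ring_nf at h
    linarith
  have hω : s • ω₁ + t • ω₂ = 0 := by
    ext v w
    simp only [LinearMap.add_apply, LinearMap.smul_apply, smul_eq_mul, LinearMap.zero_apply]
    rw [key ω₁ halt₁ hD₁ v w, key ω₂ halt₂ hD₂ v w]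
    have h1 := hφ w
    have h2 := hφ v
    linear_combination η v * h1 - η w * h2
  exact hli s t hω
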